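/- For all positive integers n, Σ_{d² ∣ n} μ(d) · σ₃(n/d²) = n³ · Π_{p ∣ n prime} (1 + 1/p³), where σ₃(m) = Σ_{t ∣ m} t³. -/
import Mathlib

open Finset Nat ArithmeticFunction

lemma aux_sum_moebius_sq (k : ℕ) (hk : k ≠ 0) :
    (∑ d ∈ k.divisors.filter (fun d => d ^ 2 ∣ k), ArithmeticFunction.moebius d) =
      if Squarefree k then 1 else 0 := by
  classical
  set K := ∏ p ∈ k.primeFactors.filter (fun p => 2 ≤ k.factorization p), p with hKdef
  have hKprime : ∀ p ∈ k.primeFactors.filter (fun p => 2 ≤ k.factorization p), p.Prime :=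
    fun p hp => Nat.prime_of_mem_primeFactors (Finset.mem_filter.mp hp).1
  have hK0 : K ≠ 0 :=
    Finset.prod_ne_zero_iff.mpr fun p hp => (hKprime p hp).ne_zero
  have key : ∀ d : ℕ, Squarefree d → (d ^ 2 ∣ k ↔ d ∣ K) := by
    intro d hd
    have hd0 : d ≠ 0 := hd.ne_zero
    constructor
    · intro h2
      have hd1 : ∏ p ∈ d.primeFactors, p = d := Nat.prod_primeFactors_of_squarefree hd
      rw [← hd1]
      apply Finset.prod_dvd_prod_of_subset
      intro p hp
      have hpp := Nat.prime_of_mem_primeFactors hp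
      have hpd : p ∣ d := Nat.dvd_of_mem_primeFactors hp
      have hp2 : p ^ 2 ∣ k := dvd_trans (pow_dvd_pow_of_dvd hpd 2) h2
      refine Finset.mem_filter.mpr ⟨Nat.mem_primeFactors.mpr
        ⟨hpp, dvd_trans (dvd_pow_self p two_ne_zero) hp2, hk⟩, ?_⟩
      exact (Nat.Prime.pow_dvd_iff_le_factorization hpp hk).mp hp2
    · intro hdK
      rw [← Nat.factorization_le_iff_dvd (pow_ne_zero 2 hd0) hk, Finsupp.le_def]
      intro p
      rw [Nat.factorization_pow]
      simp only [Finsupp.smul_apply, smul_eq_mul]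
      rcases Nat.eq_zero_or_pos (d.factorization p) with h | h
      · simp [h]
      · have hd1 : d.factorization p ≤ 1 :=
          (Nat.squarefree_iff_factorization_le_one hd0).mp hd p
        have hpd : p ∣ d := Nat.dvd_of_factorization_pos h.ne'
        have hpp : p.Prime := Nat.prime_of_mem_primeFactors
          ((Nat.support_factorization d) ▸ Finsupp.mem_support_iff.mpr h.ne')
        have hpK : p ∣ K := hpd.trans hdK
        obtain ⟨q, hq, hpq⟩ := (hpp.prime.dvd_finset_prod_iff _).mp hpK
        have : p = q := (Nat.prime_dvd_prime_iff_eq hpp (hKprime q hq)).mp hpq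
        have h2k : 2 ≤ k.factorization p := by
          subst this; exact (Finset.mem_filter.mp hq).2
        omega
  have hsets : k.divisors.filter (fun d => d ^ 2 ∣ k ∧ ArithmeticFunction.moebius d ≠ 0)
      = K.divisors.filter (fun d => ArithmeticFunction.moebius d ≠ 0) := by
    ext d
    simp only [Finset.mem_filter, Nat.mem_divisors, moebius_ne_zero_iff_squarefree]
    constructor
    · rintro ⟨⟨hdk, -⟩, h2, hsq⟩
      exact ⟨⟨(key d hsq).mp h2, hK0⟩, hsq⟩
    · rintro ⟨⟨hdK, -⟩, hsq⟩
      have h2 := (key d hsq).mpr hdK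
      exact ⟨⟨dvd_trans (dvd_pow_self d two_ne_zero) h2, hk⟩, h2, hsq⟩
  have hsum : (∑ d ∈ K.divisors, ArithmeticFunction.moebius d) = if K = 1 then 1 else 0 := by
    rw [← coe_mul_zeta_apply, moebius_mul_coe_zeta, one_apply]
  have hKiff : K = 1 ↔ Squarefree k := by
    constructor
    · intro h1
      rw [Nat.squarefree_iff_factorization_le_one hk]
      intro p
      by_contra hp
      push_neg at hp
      have hpp : p.Prime := Nat.prime_of_mem_primeFactors
        ((Nat.support_factorization k) ▸ Finsupp.mem_support_iff.mpr (by omega))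
      have hpmem : p ∈ k.primeFactors.filter (fun p => 2 ≤ k.factorization p) :=
        Finset.mem_filter.mpr ⟨(Nat.support_factorization k) ▸ Finsupp.mem_support_iff.mpr (by omega), hp⟩
      have : p ∣ K := Finset.dvd_prod_of_mem _ hpmem
      rw [h1] at this
      exact absurd (Nat.eq_one_of_dvd_one this) hpp.ne_one
    · intro hsq
      have hempty : k.primeFactors.filter (fun p => 2 ≤ k.factorization p) = ∅ := by
        rw [Finset.filter_eq_empty_iff]
        intro p _
        have := (Nat.squarefree_iff_factorization_le_one hk).mp hsq p
        omega
      rw [hKdef, hempty, Finset.prod_empty]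
  calc (∑ d ∈ k.divisors.filter (fun d => d ^ 2 ∣ k), ArithmeticFunction.moebius d)
      = ∑ d ∈ (k.divisors.filter (fun d => d ^ 2 ∣ k)).filter
          (fun d => ArithmeticFunction.moebius d ≠ 0), ArithmeticFunction.moebius d :=
        (Finset.sum_filter_ne_zero _).symm
    _ = ∑ d ∈ K.divisors.filter (fun d => ArithmeticFunction.moebius d ≠ 0),
          ArithmeticFunction.moebius d := by rw [Finset.filter_filter, hsets]
    _ = ∑ d ∈ K.divisors, ArithmeticFunction.moebius d := Finset.sum_filter_ne_zero _
    _ = if K = 1 then 1 else 0 := hsum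
    _ = if Squarefree k then 1 else 0 := by simp only [hKiff]

theorem stmt_19 (n : ℕ) (hn : 0 < n) :
    ∑ d ∈ n.divisors.filter (fun d => d ^ 2 ∣ n),
        (ArithmeticFunction.moebius d : ℝ) * (ArithmeticFunction.sigma 3 (n / d ^ 2) : ℝ) =
      (n : ℝ) ^ 3 * ∏ p ∈ n.primeFactors, (1 + 1 / (p : ℝ) ^ 3) := by
  classical
  have hn0 : n ≠ 0 := hn.ne'
  -- Step 1: expand sigma and swap the order of summation
  have step1 : ∀ d ∈ n.divisors.filter (fun d => d ^ 2 ∣ n),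
      (ArithmeticFunction.moebius d : ℝ) * (ArithmeticFunction.sigma 3 (n / d ^ 2) : ℝ)
        = ∑ t ∈ n.divisors, if t ∣ n / d ^ 2 then (ArithmeticFunction.moebius d : ℝ) * (t : ℝ) ^ 3 else 0 := by
    intro d hd
    obtain ⟨hdmem, h2⟩ := Finset.mem_filter.mp hd
    rw [ArithmeticFunction.sigma_apply,
      ← Nat.divisors_filter_dvd_of_dvd hn0 (Nat.div_dvd_of_dvd h2), Finset.sum_filter]
    push_cast
    rw [Finset.mul_sum]
    exact Finset.sum_congr rfl fun t _ => by split_ifs <;> simp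
  rw [Finset.sum_congr rfl step1, Finset.sum_comm]
  -- Step 2: evaluate the inner sum using the key lemma
  have inner : ∀ t ∈ n.divisors,
      (∑ d ∈ n.divisors.filter (fun d => d ^ 2 ∣ n),
        if t ∣ n / d ^ 2 then (ArithmeticFunction.moebius d : ℝ) * (t : ℝ) ^ 3 else 0)
      = (if Squarefree (n / t) then (1 : ℝ) else 0) * (t : ℝ) ^ 3 := by
    intro t ht
    have htn : t ∣ n := (Nat.mem_divisors.mp ht).1
    have ht0 : 0 < t := Nat.pos_of_mem_divisors ht
    have hnt0 : n / t ≠ 0 := (Nat.div_pos (Nat.le_of_dvd hn htn) ht0).ne'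
    rw [← Finset.sum_filter, Finset.filter_filter]
    have hset : n.divisors.filter (fun d => d ^ 2 ∣ n ∧ t ∣ n / d ^ 2)
        = (n / t).divisors.filter (fun d => d ^ 2 ∣ n / t) := by
      ext d
      simp only [Finset.mem_filter, Nat.mem_divisors]
      constructor
      · rintro ⟨⟨hdn, -⟩, h2, htd⟩
        have hmul : d ^ 2 * t ∣ n := (Nat.dvd_div_iff_mul_dvd h2).mp htd
        have h2t : d ^ 2 ∣ n / t := (Nat.dvd_div_iff_mul_dvd htn).mpr (by rwa [mul_comm] at hmul)
        exact ⟨⟨dvd_trans (dvd_pow_self d two_ne_zero) h2t, hnt0⟩, h2t⟩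
      · rintro ⟨⟨hdnt, -⟩, h2t⟩
        have hmul : t * d ^ 2 ∣ n := (Nat.dvd_div_iff_mul_dvd htn).mp h2t
        have h2 : d ^ 2 ∣ n := dvd_trans (dvd_mul_left (d ^ 2) t) hmul
        have htd : t ∣ n / d ^ 2 := (Nat.dvd_div_iff_mul_dvd h2).mpr (by rwa [mul_comm] at hmul)
        exact ⟨⟨dvd_trans (dvd_pow_self d two_ne_zero) h2, hn0⟩, h2, htd⟩
    rw [hset, ← Finset.sum_mul]
    congr 1
    have := aux_sum_moebius_sq (n / t) hnt0
    have hcast : (∑ d ∈ (n / t).divisors.filter (fun d => d ^ 2 ∣ n / t),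
        (ArithmeticFunction.moebius d : ℝ))
        = ((∑ d ∈ (n / t).divisors.filter (fun d => d ^ 2 ∣ n / t),
            ArithmeticFunction.moebius d : ℤ) : ℝ) := by push_cast; rfl
    rw [hcast, this]
    split_ifs <;> simp
  rw [Finset.sum_congr rfl inner]
  -- Step 3: reindex t ↦ n / t
  have reindex : (∑ t ∈ n.divisors, (if Squarefree (n / t) then (1 : ℝ) else 0) * (t : ℝ) ^ 3)
      = ∑ d ∈ n.divisors, (if Squarefree d then (1 : ℝ) else 0) * ((n / d : ℕ) : ℝ) ^ 3 := by
    rw [← Nat.sum_div_divisors n (fun d => (if Squarefree d then (1 : ℝ) else 0) * ((n / d : ℕ) : ℝ) ^ 3)]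
    refine Finset.sum_congr rfl fun t ht => ?_
    rw [Nat.div_div_self (Nat.mem_divisors.mp ht).1 hn0]
  rw [reindex]
  simp_rw [ite_mul, one_mul, zero_mul, ← Finset.sum_filter]
  -- Step 4: cast each term and factor out n^3
  have cast_term : ∀ d ∈ n.divisors.filter Squarefree,
      ((n / d : ℕ) : ℝ) ^ 3 = (n : ℝ) ^ 3 * (1 / (d : ℝ) ^ 3) := by
    intro d hd
    have hdn : d ∣ n := (Nat.mem_divisors.mp (Finset.mem_filter.mp hd).1).1
    have hd0 : (d : ℝ) ≠ 0 := Nat.cast_ne_zero.mpr (Nat.pos_of_mem_divisors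
      (Finset.mem_filter.mp hd).1).ne'
    rw [Nat.cast_div hdn hd0, div_pow]
    field_simp
  rw [Finset.sum_congr rfl cast_term, ← Finset.mul_sum]
  congr 1
  -- Step 5: the sum over squarefree divisors equals the product
  rw [Nat.sum_divisors_filter_squarefree hn0]
  have hfac : (UniqueFactorizationMonoid.normalizedFactors n).toFinset = n.primeFactors := by
    rw [Nat.factors_eq]
    simp
  rw [hfac]
  symm
  calc (∏ p ∈ n.primeFactors, (1 + 1 / (p : ℝ) ^ 3))
      = ∏ p ∈ n.primeFactors, (1 / (p : ℝ) ^ 3 + 1) := by simp_rw [add_comm]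
    _ = ∑ S ∈ n.primeFactors.powerset, (∏ p ∈ S, 1 / (p : ℝ) ^ 3) * ∏ p ∈ n.primeFactors \ S, 1 :=
        Finset.prod_add _ _ _
    _ = ∑ S ∈ n.primeFactors.powerset, 1 / ((S.val.prod : ℕ) : ℝ) ^ 3 := by
        refine Finset.sum_congr rfl fun S hS => ?_
        rw [Finset.prod_const_one, mul_one]
        have : (S.val.prod : ℕ) = ∏ p ∈ S, p := by
          rw [Finset.prod]; exact congrArg Multiset.prod (Multiset.map_id' _).symm
        rw [this]
        push_cast
        rw [← Finset.prod_pow]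
        simp [Finset.prod_inv_distrib, one_div]
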